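/- Let m, n, l ≥ 1, let H₀ ∈ ℂ^{l×m}, H₁ ∈ ℂ^{n×m}, H₂ ∈ ℂ^{l×n}, and let P₀, P₁, P₂ > 0. Let C₁ be a finite nonempty set of unit vectors in ℂ^m and C₂ a finite nonempty set of unit vectors in ℂ^n. Define F(a, b) = ab/(1 + a + b) for a, b ≥ 0, and let γ₂⋆ = sup{ P₂‖H₂w‖² : ‖w‖ = 1 }, attained by a unit vector g₁ ∈ ℂ^n. Define γ(s) = F(P₁‖H₁s‖², γ₂⋆) + P₀‖H₀s‖² for unit s ∈ ℂ^m, and let s⋆ be a unit vector attaining γ⋆ = sup{ γ(s) : ‖s‖ = 1 }. Let γ̃ = max over w₁ ∈ C₁ and w₂ ∈ C₂ of F(P₁‖H₁w₁‖², P₂‖H₂w₂‖²) + P₀‖H₀w₁‖². Then γ⋆ − γ̃ ≤ 2P₂‖H₂‖_F² · min_{w∈C₂} d(g₁, w) + 2(P₁‖H₁‖_F² + P₀‖H₀‖_F²) · min_{w∈C₁} d(s⋆, w), where d(u, v) = √(1 − |uᴴv|²). -/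

import Mathlib

/-- Euclidean norm of a complex vector. -/
noncomputable def cnorm {k : ℕ} (v : Fin k → ℂ) : ℝ :=
  Real.sqrt (∑ i, ‖v i‖ ^ 2)

/-- Squared Frobenius norm of a complex matrix. -/
noncomputable def frobSq {p q : ℕ} (A : Matrix (Fin p) (Fin q) ℂ) : ℝ :=
  ∑ i, ∑ j, ‖A i j‖ ^ 2

/-- Chordal distance between complex vectors: `d(u,v) = √(1 − |uᴴv|²)`. -/
noncomputable def cdist {k : ℕ} (u v : Fin k → ℂ) : ℝ :=
  Real.sqrt (1 - ‖dotProduct (star u) v‖ ^ 2)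

/-- End-to-end two-hop relay SNR with hop SNRs `a`, `b`. -/
noncomputable def snrF (a b : ℝ) : ℝ := a * b / (1 + a + b)

open scoped InnerProductSpace ComplexConjugate

noncomputable def toE {k : ℕ} (v : Fin k → ℂ) : EuclideanSpace ℂ (Fin k) :=
  (WithLp.equiv 2 _).symm v

lemma cnorm_eq_norm {k : ℕ} (v : Fin k → ℂ) : cnorm v = ‖toE v‖ := by
  rw [EuclideanSpace.norm_eq]; rfl

lemma inner_toE {k : ℕ} (u v : Fin k → ℂ) :
    (inner ℂ (toE u) (toE v) : ℂ) = dotProduct (star u) v :=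
  (EuclideanSpace.inner_toLp_toLp u v).trans (dotProduct_comm _ _)

lemma toE_sub {k : ℕ} (u v : Fin k → ℂ) : toE (u - v) = toE u - toE v := rfl
lemma toE_add {k : ℕ} (u v : Fin k → ℂ) : toE (u + v) = toE u + toE v := rfl
lemma toE_smul {k : ℕ} (z : ℂ) (v : Fin k → ℂ) : toE (z • v) = z • toE v := rfl

lemma frobSq_nonneg {p q : ℕ} (A : Matrix (Fin p) (Fin q) ℂ) : 0 ≤ frobSq A := by
  apply Finset.sum_nonneg; intro i _; apply Finset.sum_nonneg; intro j _; positivity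

lemma cnorm_sq {k : ℕ} (v : Fin k → ℂ) : cnorm v ^ 2 = ∑ i, ‖v i‖ ^ 2 := by
  rw [cnorm, Real.sq_sqrt]; exact Finset.sum_nonneg fun i _ => by positivity

lemma frob_bound {p q : ℕ} (H : Matrix (Fin p) (Fin q) ℂ) (x : Fin q → ℂ) :
    cnorm (H.mulVec x) ^ 2 ≤ frobSq H * cnorm x ^ 2 := by
  rw [cnorm_sq, cnorm_sq, frobSq, Finset.sum_mul]
  apply Finset.sum_le_sum
  intro i _
  have key : ‖(H.mulVec x) i‖ ≤ ‖toE (fun j => star (H i j))‖ * ‖toE x‖ := by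
    have h1 : (H.mulVec x) i = inner ℂ (toE (fun j => star (H i j))) (toE x) := by
      rw [inner_toE]
      simp [Matrix.mulVec, dotProduct]
    rw [h1]
    exact norm_inner_le_norm _ _
  calc ‖(H.mulVec x) i‖ ^ 2 ≤ (‖toE (fun j => star (H i j))‖ * ‖toE x‖) ^ 2 := by
        apply pow_le_pow_left₀ (norm_nonneg _) key
    _ = (∑ j, ‖H i j‖ ^ 2) * ∑ j, ‖x j‖ ^ 2 := by
        rw [mul_pow, ← cnorm_eq_norm, ← cnorm_eq_norm, cnorm_sq, cnorm_sq]
        simp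

lemma cnorm_mulVec_le {p q : ℕ} (H : Matrix (Fin p) (Fin q) ℂ) (x : Fin q → ℂ) :
    cnorm (H.mulVec x) ≤ Real.sqrt (frobSq H) * cnorm x := by
  have h0 : 0 ≤ cnorm x := Real.sqrt_nonneg _
  have h1 : 0 ≤ cnorm (H.mulVec x) := Real.sqrt_nonneg _
  calc cnorm (H.mulVec x) = Real.sqrt (cnorm (H.mulVec x) ^ 2) := (Real.sqrt_sq h1).symm
    _ ≤ Real.sqrt (frobSq H * cnorm x ^ 2) := Real.sqrt_le_sqrt (frob_bound H x)
    _ = Real.sqrt (frobSq H) * cnorm x := by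
        rw [Real.sqrt_mul (frobSq_nonneg H), Real.sqrt_sq h0]

lemma cdist_nonneg {k : ℕ} (u v : Fin k → ℂ) : 0 ≤ cdist u v := Real.sqrt_nonneg _

lemma cdist_symm {k : ℕ} (u v : Fin k → ℂ) : cdist u v = cdist v u := by
  unfold cdist
  congr 2
  have : dotProduct (star v) u = star (dotProduct (star u) v) := by
    simp [dotProduct, mul_comm]
  rw [this, norm_star]

/-- one-sided quadratic form perturbation bound -/
lemma quad_diff_le {p q : ℕ} (H : Matrix (Fin p) (Fin q) ℂ) (u v : Fin q → ℂ)
    (hu : cnorm u = 1) (hv : cnorm v = 1) :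
    cnorm (H.mulVec u) ^ 2 - cnorm (H.mulVec v) ^ 2 ≤ 2 * frobSq H * cdist u v := by
  set c : ℂ := dotProduct (star u) v with hc
  obtain ⟨z, hz1, hz2⟩ : ∃ z : ℂ, ‖z‖ = 1 ∧ z * c = (‖c‖ : ℂ) := by
    by_cases h : c = 0
    · exact ⟨1, by simp [h]⟩
    · refine ⟨(‖c‖ : ℂ) / c, ?_, by field_simp⟩
      rw [norm_div, Complex.norm_real, norm_norm, div_self (norm_ne_zero_iff.mpr h)]
  set w : Fin q → ℂ := z • v with hw
  have hwnorm : ‖toE w‖ = 1 := by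
    rw [hw, toE_smul, norm_smul, hz1, one_mul, ← cnorm_eq_norm, hv]
  have hunorm : ‖toE u‖ = 1 := by rw [← cnorm_eq_norm, hu]
  have hinner : (inner ℂ (toE u) (toE w) : ℂ) = (‖c‖ : ℂ) := by
    rw [hw, toE_smul, inner_smul_right, inner_toE, ← hc, hz2]
  have hre : RCLike.re (inner ℂ (toE u) (toE w) : ℂ) = ‖c‖ := by rw [hinner]; simp
  have hc1 : ‖c‖ ≤ 1 := by
    have := norm_inner_le_norm (𝕜 := ℂ) (toE u) (toE v)
    rwa [inner_toE, ← hc, hunorm, ← cnorm_eq_norm, hv, one_mul] at this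
  have hHw : cnorm (H.mulVec w) = cnorm (H.mulVec v) := by
    rw [hw, Matrix.mulVec_smul, cnorm_eq_norm, toE_smul, norm_smul, hz1, one_mul, cnorm_eq_norm]
  -- difference of squared norms as inner product
  set a : EuclideanSpace ℂ (Fin p) := toE (H.mulVec u)
  set b : EuclideanSpace ℂ (Fin p) := toE (H.mulVec w)
  have expand : ‖a‖ ^ 2 - ‖b‖ ^ 2 = RCLike.re (inner ℂ (a - b) (a + b) : ℂ) := by
    rw [inner_sub_left, inner_add_right, inner_add_right]
    simp only [map_sub, map_add]
    have h1 : RCLike.re (inner ℂ a a : ℂ) = ‖a‖ ^ 2 := inner_self_eq_norm_sq (𝕜 := ℂ) a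
    have h2 : RCLike.re (inner ℂ b b : ℂ) = ‖b‖ ^ 2 := inner_self_eq_norm_sq (𝕜 := ℂ) b
    have h3 : RCLike.re (inner ℂ b a : ℂ) = RCLike.re (inner ℂ a b : ℂ) := by
      rw [← inner_conj_symm a b, RCLike.conj_re]
    rw [h1, h2, h3]; ring
  have hab : a - b = toE (H.mulVec (u - w)) := by
    rw [Matrix.mulVec_sub, toE_sub]
  have hab2 : a + b = toE (H.mulVec (u + w)) := by
    rw [Matrix.mulVec_add, toE_add]
  have humw : ‖toE (u - w)‖ ^ 2 = 2 - 2 * ‖c‖ := by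
    rw [toE_sub, norm_sub_sq (𝕜 := ℂ), hre, hunorm, hwnorm]; ring
  have hupw : ‖toE (u + w)‖ ^ 2 = 2 + 2 * ‖c‖ := by
    rw [toE_add, norm_add_sq (𝕜 := ℂ), hre, hunorm, hwnorm]; ring
  have key : ‖a‖ ^ 2 - ‖b‖ ^ 2 ≤ frobSq H * (‖toE (u - w)‖ * ‖toE (u + w)‖) := by
    rw [expand]
    calc RCLike.re (inner ℂ (a - b) (a + b) : ℂ) ≤ ‖(inner ℂ (a - b) (a + b) : ℂ)‖ :=
          RCLike.re_le_norm _
      _ ≤ ‖a - b‖ * ‖a + b‖ := norm_inner_le_norm _ _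
      _ ≤ (Real.sqrt (frobSq H) * ‖toE (u - w)‖) * (Real.sqrt (frobSq H) * ‖toE (u + w)‖) := by
          rw [hab, hab2]
          apply mul_le_mul
          · rw [← cnorm_eq_norm, ← cnorm_eq_norm]; exact cnorm_mulVec_le H _
          · rw [← cnorm_eq_norm, ← cnorm_eq_norm]; exact cnorm_mulVec_le H _
          · exact norm_nonneg _
          · positivity
      _ = frobSq H * (‖toE (u - w)‖ * ‖toE (u + w)‖) := by
          rw [show (Real.sqrt (frobSq H) * ‖toE (u - w)‖) * (Real.sqrt (frobSq H) * ‖toE (u + w)‖)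
              = (Real.sqrt (frobSq H) * Real.sqrt (frobSq H)) * (‖toE (u - w)‖ * ‖toE (u + w)‖)
              from by ring, Real.mul_self_sqrt (frobSq_nonneg H)]
  have hprod : ‖toE (u - w)‖ * ‖toE (u + w)‖ = 2 * cdist u v := by
    have h1 : (‖toE (u - w)‖ * ‖toE (u + w)‖) ^ 2 = (2 * cdist u v) ^ 2 := by
      rw [mul_pow, humw, hupw, mul_pow, cdist, Real.sq_sqrt (by nlinarith : (0:ℝ) ≤ 1 - ‖c‖ ^ 2)]
      ring
    have h2 : 0 ≤ ‖toE (u - w)‖ * ‖toE (u + w)‖ := by positivity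
    have h3 : 0 ≤ 2 * cdist u v := by have := cdist_nonneg u v; linarith
    nlinarith
  calc cnorm (H.mulVec u) ^ 2 - cnorm (H.mulVec v) ^ 2
      = ‖a‖ ^ 2 - ‖b‖ ^ 2 := by rw [← hHw, cnorm_eq_norm, cnorm_eq_norm]
    _ ≤ frobSq H * (‖toE (u - w)‖ * ‖toE (u + w)‖) := key
    _ = 2 * frobSq H * cdist u v := by rw [hprod]; ring

lemma quad_diff_abs {p q : ℕ} (H : Matrix (Fin p) (Fin q) ℂ) (u v : Fin q → ℂ)
    (hu : cnorm u = 1) (hv : cnorm v = 1) :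
    |cnorm (H.mulVec u) ^ 2 - cnorm (H.mulVec v) ^ 2| ≤ 2 * frobSq H * cdist u v := by
  rw [abs_sub_le_iff]
  constructor
  · exact quad_diff_le H u v hu hv
  · rw [cdist_symm u v]; exact quad_diff_le H v u hv hu

lemma snrF_lip {a a' b b' : ℝ} (ha : 0 ≤ a) (ha' : 0 ≤ a') (hb : 0 ≤ b) (hb' : 0 ≤ b') :
    snrF a b - snrF a' b' ≤ |a - a'| + |b - b'| := by
  unfold snrF
  have hD : (0:ℝ) < 1 + a + b := by linarith
  have hD' : (0:ℝ) < 1 + a' + b' := by linarith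
  rw [div_sub_div _ _ (ne_of_gt hD) (ne_of_gt hD'), div_le_iff₀ (by positivity)]
  have hnum : a * b * (1 + a' + b') - (1 + a + b) * (a' * b')
      = a * (1 + a') * (b - b') + b' * (1 + b) * (a - a') := by ring
  rw [hnum]
  have h1 : a * (1 + a') * (b - b') ≤ (1 + a + b) * (1 + a' + b') * |b - b'| := by
    calc a * (1 + a') * (b - b') ≤ a * (1 + a') * |b - b'| := by
          apply mul_le_mul_of_nonneg_left (le_abs_self _) (by positivity)
      _ ≤ (1 + a + b) * (1 + a' + b') * |b - b'| := by
          apply mul_le_mul_of_nonneg_right _ (abs_nonneg _)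
          apply mul_le_mul <;> [linarith; linarith; positivity; linarith]
  have h2 : b' * (1 + b) * (a - a') ≤ (1 + a + b) * (1 + a' + b') * |a - a'| := by
    calc b' * (1 + b) * (a - a') ≤ b' * (1 + b) * |a - a'| := by
          apply mul_le_mul_of_nonneg_left (le_abs_self _) (by positivity)
      _ ≤ (1 + a + b) * (1 + a' + b') * |a - a'| := by
          apply mul_le_mul_of_nonneg_right _ (abs_nonneg _)
          have : b' * (1 + b) ≤ (1 + a' + b') * (1 + a + b) := by nlinarith
          linarith
  calc a * (1 + a') * (b - b') + b' * (1 + b) * (a - a')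
      ≤ (1 + a + b) * (1 + a' + b') * |b - b'| + (1 + a + b) * (1 + a' + b') * |a - a'| := by
        linarith
    _ = (|a - a'| + |b - b'|) * ((1 + a + b) * (1 + a' + b')) := by ring

lemma my_le_sup' {α β : Type*} [SemilatticeSup β] (s : Finset α) (h : s.Nonempty)
    (f : α → β) (b : α) (hb : b ∈ s) (c : β) (hc : c = f b) : c ≤ s.sup' h f :=
  hc ▸ Finset.le_sup' f hb


set_option maxHeartbeats 1000000 in
/-- SNR loss bound for the quantized relay scheme with the direct link:
`γ⋆ − γ̃ ≤ 2P₂‖H₂‖_F² min_{w∈C₂} d(g₁,w) + 2(P₁‖H₁‖_F² + P₀‖H₀‖_F²) min_{w∈C₁} d(s⋆,w)`,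
where `g₁` maximizes the relay-Rx SNR, `s⋆` maximizes the total SNR
`γ(s) = F(P₁‖H₁s‖², γ₂⋆) + P₀‖H₀s‖²` over the unit sphere, and `γ̃` is the best total SNR
over the codebooks `C₁ × C₂`. -/
theorem stmt18 (m n l : ℕ) (hm : 1 ≤ m) (hn : 1 ≤ n) (hl : 1 ≤ l)
    (H₀ : Matrix (Fin l) (Fin m) ℂ) (H₁ : Matrix (Fin n) (Fin m) ℂ)
    (H₂ : Matrix (Fin l) (Fin n) ℂ)
    (P₀ P₁ P₂ : ℝ) (hP₀ : 0 < P₀) (hP₁ : 0 < P₁) (hP₂ : 0 < P₂)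
    (C₁ : Finset (Fin m → ℂ)) (hC₁ : C₁.Nonempty) (hC₁u : ∀ w ∈ C₁, cnorm w = 1)
    (C₂ : Finset (Fin n → ℂ)) (hC₂ : C₂.Nonempty) (hC₂u : ∀ w ∈ C₂, cnorm w = 1)
    (g₁ : Fin n → ℂ) (hg₁u : cnorm g₁ = 1)
    (hg₁ : ∀ w : Fin n → ℂ, cnorm w = 1 →
      P₂ * cnorm (H₂.mulVec w) ^ 2 ≤ P₂ * cnorm (H₂.mulVec g₁) ^ 2)
    (sstar : Fin m → ℂ) (hsstaru : cnorm sstar = 1)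
    (hsstar : ∀ s : Fin m → ℂ, cnorm s = 1 →
      snrF (P₁ * cnorm (H₁.mulVec s) ^ 2) (P₂ * cnorm (H₂.mulVec g₁) ^ 2) +
          P₀ * cnorm (H₀.mulVec s) ^ 2 ≤
        snrF (P₁ * cnorm (H₁.mulVec sstar) ^ 2) (P₂ * cnorm (H₂.mulVec g₁) ^ 2) +
          P₀ * cnorm (H₀.mulVec sstar) ^ 2) :
    (snrF (P₁ * cnorm (H₁.mulVec sstar) ^ 2) (P₂ * cnorm (H₂.mulVec g₁) ^ 2) +
        P₀ * cnorm (H₀.mulVec sstar) ^ 2) -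
      ((C₁ ×ˢ C₂).sup' (hC₁.product hC₂) fun p =>
        snrF (P₁ * cnorm (H₁.mulVec p.1) ^ 2) (P₂ * cnorm (H₂.mulVec p.2) ^ 2) +
          P₀ * cnorm (H₀.mulVec p.1) ^ 2) ≤
    2 * P₂ * frobSq H₂ * (C₂.inf' hC₂ fun w => cdist g₁ w) +
      2 * (P₁ * frobSq H₁ + P₀ * frobSq H₀) * (C₁.inf' hC₁ fun w => cdist sstar w) := by
  obtain ⟨w₁, hw₁, hinf1⟩ := Finset.exists_mem_eq_inf' hC₁ (fun w => cdist sstar w)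
  obtain ⟨w₂, hw₂, hinf2⟩ := Finset.exists_mem_eq_inf' hC₂ (fun w => cdist g₁ w)
  rw [hinf1, hinf2]
  have hsup : snrF (P₁ * cnorm (H₁.mulVec w₁) ^ 2) (P₂ * cnorm (H₂.mulVec w₂) ^ 2) +
      P₀ * cnorm (H₀.mulVec w₁) ^ 2 ≤
      ((C₁ ×ˢ C₂).sup' (hC₁.product hC₂) fun p =>
        snrF (P₁ * cnorm (H₁.mulVec p.1) ^ 2) (P₂ * cnorm (H₂.mulVec p.2) ^ 2) +
          P₀ * cnorm (H₀.mulVec p.1) ^ 2) := by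
    refine my_le_sup' _ _ _ (w₁, w₂) (Finset.mem_product.mpr ⟨hw₁, hw₂⟩) _ ?_
    rfl
  have key1 := quad_diff_abs H₁ sstar w₁ hsstaru (hC₁u w₁ hw₁)
  have key0 := quad_diff_abs H₀ sstar w₁ hsstaru (hC₁u w₁ hw₁)
  have key2 := quad_diff_abs H₂ g₁ w₂ hg₁u (hC₂u w₂ hw₂)
  have hα : |P₁ * cnorm (H₁.mulVec sstar) ^ 2 - P₁ * cnorm (H₁.mulVec w₁) ^ 2|
      ≤ P₁ * (2 * frobSq H₁ * cdist sstar w₁) := by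
    rw [← mul_sub, abs_mul, abs_of_pos hP₁]
    exact mul_le_mul_of_nonneg_left key1 (le_of_lt hP₁)
  have hδ : |P₀ * cnorm (H₀.mulVec sstar) ^ 2 - P₀ * cnorm (H₀.mulVec w₁) ^ 2|
      ≤ P₀ * (2 * frobSq H₀ * cdist sstar w₁) := by
    rw [← mul_sub, abs_mul, abs_of_pos hP₀]
    exact mul_le_mul_of_nonneg_left key0 (le_of_lt hP₀)
  have hβ : |P₂ * cnorm (H₂.mulVec g₁) ^ 2 - P₂ * cnorm (H₂.mulVec w₂) ^ 2|
      ≤ P₂ * (2 * frobSq H₂ * cdist g₁ w₂) := by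
    rw [← mul_sub, abs_mul, abs_of_pos hP₂]
    exact mul_le_mul_of_nonneg_left key2 (le_of_lt hP₂)
  have lip := snrF_lip (a := P₁ * cnorm (H₁.mulVec sstar) ^ 2)
    (a' := P₁ * cnorm (H₁.mulVec w₁) ^ 2)
    (b := P₂ * cnorm (H₂.mulVec g₁) ^ 2)
    (b' := P₂ * cnorm (H₂.mulVec w₂) ^ 2)
    (by positivity) (by positivity) (by positivity) (by positivity)
  have hδle := le_abs_self (P₀ * cnorm (H₀.mulVec sstar) ^ 2 - P₀ * cnorm (H₀.mulVec w₁) ^ 2)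
  linarith
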